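/- If α has bounded partial quotients, then there exists a constant K_1 > 0 such that min(|P_n|, |M_n|) > K_1·|w_n| for every n ≥ 1. -/

import Mathlib

open Set

/-- The rotation `R : x ↦ {x+α}` of `[0,1)`. -/
noncomputable def rotR (α : ℝ) (x : ℝ) : ℝ := Int.fract (x + α)

/-- Coding of a point of `[0,1)` over the alphabet `{l, r}` (modelled as `Bool`, with
`l = false`, `r = true`): letter `l` on `[0,1−α)` and `r` on `[1−α,1)`. -/
noncomputable def codeR (α : ℝ) (x : ℝ) : Bool :=
  if Int.fract x < 1 - α then false else true

/-- The Sturmian language `L(R)`: all finite words occurring in codings of `R`-orbits. -/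
noncomputable def LangR (α : ℝ) : Set (List Bool) :=
  {w | ∃ x ∈ Set.Ico (0 : ℝ) 1, ∃ k : ℕ,
    w = (List.range w.length).map fun j => codeR α ((rotR α)^[k + j] x)}

/-- The data `(l_n, r_n, w_n, M_n, P_n)` of the recursion. -/
structure SDI where
  l : ℝ
  r : ℝ
  w : List Bool
  M : List Bool
  P : List Bool

/-- One step of the recursion: if `l_n > r_n` then `l_{n+1} = l_n − r_n`, `r_{n+1} = r_n`,
`w_{n+1} = w_n P_n`, `P_{n+1} = P_n`, `M_{n+1} = M_n P_n`; if `r_n > l_n` then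
`l_{n+1} = l_n`, `r_{n+1} = r_n − l_n`, `w_{n+1} = w_n M_n`, `P_{n+1} = P_n M_n`,
`M_{n+1} = M_n` (for irrational `α` the case `l_n = r_n` never occurs). -/
noncomputable def SDI.step (t : SDI) : SDI :=
  if t.r < t.l then ⟨t.l - t.r, t.r, t.w ++ t.P, t.M ++ t.P, t.P⟩
  else ⟨t.l, t.r - t.l, t.w ++ t.M, t.M, t.P ++ t.M⟩

/-- `sdi α n` is the data `(l_n, r_n, w_n, M_n, P_n)` (meaningful for `n ≥ 1`), starting
from `l_1 = α`, `r_1 = 1 − 2α`, `w_1 = l`, `M_1 = l`, `P_1 = rl`. -/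
noncomputable def sdi (α : ℝ) (n : ℕ) : SDI :=
  SDI.step^[n - 1] ⟨α, 1 - 2 * α, [false], [false], [true, false]⟩

/-- The `(k+1)`-st partial quotient of `α ∈ (0,1)`, obtained by iterating the Gauss map
`x ↦ {1/x}`: for irrational `α = [0; a_1+1, a_2, a_3, …]` (as in the context) one has
`pq α 0 = a_1 + 1` and `pq α k = a_{k+1}` for `k ≥ 1`. -/
noncomputable def pq (α : ℝ) (k : ℕ) : ℤ :=
  ⌊((fun x : ℝ => Int.fract x⁻¹)^[k] α)⁻¹⌋

/-- `α` has bounded partial quotients. -/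
def BoundedPQ (α : ℝ) : Prop :=
  ∃ B : ℤ, ∀ k : ℕ, pq α k ≤ B

namespace SturmAux

/-- Gauss map iterates. -/
noncomputable def g (α : ℝ) (k : ℕ) : ℝ := (fun x : ℝ => Int.fract x⁻¹)^[k] α

lemma g_zero (α : ℝ) : g α 0 = α := rfl

lemma g_succ (α : ℝ) (k : ℕ) : g α (k + 1) = Int.fract (g α k)⁻¹ :=
  Function.iterate_succ_apply' _ _ _

lemma pq_eq (α : ℝ) (k : ℕ) : pq α k = ⌊(g α k)⁻¹⌋ := rfl

lemma g_mem {α : ℝ} (hirr : Irrational α) (h0 : 0 < α) (h1 : α < 1) :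
    ∀ k, Irrational (g α k) ∧ 0 < g α k ∧ g α k < 1 := by
  intro k
  induction k with
  | zero => exact ⟨hirr, h0, h1⟩
  | succ n ih =>
    obtain ⟨hi, hp, _⟩ := ih
    have hinv : Irrational (g α n)⁻¹ := hi.inv
    have hfr : Irrational (Int.fract (g α n)⁻¹) := by
      rw [← Int.self_sub_floor]
      exact hinv.sub_intCast _
    refine ⟨by rw [g_succ]; exact hfr, ?_, by rw [g_succ]; exact Int.fract_lt_one _⟩
    rw [g_succ]
    exact Int.fract_pos.mpr (hinv.ne_int _)

lemma ratio_lt {α : ℝ} {B : ℤ} (hB : ∀ k : ℕ, pq α k ≤ B) (k m : ℕ) :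
    (g α k)⁻¹ - (m : ℝ) < (B : ℝ) + 1 := by
  have h1 : (g α k)⁻¹ < (⌊(g α k)⁻¹⌋ : ℝ) + 1 := Int.lt_floor_add_one _
  have h2 : (⌊(g α k)⁻¹⌋ : ℝ) ≤ (B : ℝ) := by exact_mod_cast hB k
  have h3 : (0 : ℝ) ≤ (m : ℝ) := Nat.cast_nonneg m
  linarith

/-- The main invariant carried along the orbit. -/
structure Inv (α : ℝ) (B : ℤ) (t : SDI) : Prop where
  lpos : 0 < t.l
  rpos : 0 < t.r
  ratio : ∃ k m : ℕ, max (t.l / t.r) (t.r / t.l) = (g α k)⁻¹ - (m : ℝ)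
  hM : 1 ≤ t.M.length
  hP : 1 ≤ t.P.length
  ineqM : (t.M.length : ℝ) + t.l / t.r * t.P.length ≤ ((B : ℝ) + 2) * t.P.length
  ineqP : (t.P.length : ℝ) + t.r / t.l * t.M.length ≤ ((B : ℝ) + 2) * t.M.length
  hw : t.w.length < t.M.length + t.P.length

lemma irr_val {α : ℝ} (hg : ∀ k, Irrational (g α k) ∧ 0 < g α k ∧ g α k < 1)
    (k m : ℕ) : Irrational ((g α k)⁻¹ - (m : ℝ)) :=
  (hg k).1.inv.sub_natCast m

end SturmAux

namespace SturmAux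

/-- Core step computation, abstracted over which of `l, r` is larger.
`a` is the larger of the pair, `b` the smaller; `Y` is the length of the word
paired with `a`, `X` the other length. -/
lemma key {α : ℝ} {B : ℤ}
    (hg : ∀ k, Irrational (g α k) ∧ 0 < g α k ∧ g α k < 1)
    (hB : ∀ k : ℕ, pq α k ≤ B)
    {a b : ℝ} {X Y : ℕ} (hb : 0 < b) (hab : b < a)
    (hratio : ∃ k m : ℕ, a / b = (g α k)⁻¹ - (m : ℝ))
    (h1 : (X : ℝ) + a / b * Y ≤ ((B : ℝ) + 2) * Y) :
    (∃ k m : ℕ, max ((a - b) / b) (b / (a - b)) = (g α k)⁻¹ - (m : ℝ)) ∧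
      ((X : ℝ) + Y + (a - b) / b * Y ≤ ((B : ℝ) + 2) * Y) ∧
      ((Y : ℝ) + b / (a - b) * ((X : ℝ) + Y) ≤ ((B : ℝ) + 2) * ((X : ℝ) + Y)) := by
  obtain ⟨k, m, hk⟩ := hratio
  have hab' : 0 < a - b := by linarith
  have hd : (a - b) / b = a / b - 1 := by rw [sub_div, div_self hb.ne']
  have hval : (a - b) / b = (g α k)⁻¹ - ((m : ℝ) + 1) := by rw [hd, hk]; ring
  have hirrv : Irrational ((a - b) / b) := by
    rw [hval]
    have := irr_val hg k (m + 1)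
    push_cast at this
    exact this
  have hpos : 0 < (a - b) / b := div_pos hab' hb
  have hratio' : ∃ k' m' : ℕ, max ((a - b) / b) (b / (a - b)) = (g α k')⁻¹ - (m' : ℝ) := by
    rcases lt_or_gt_of_ne hirrv.ne_one with hlt | hgt
    · -- (a-b)/b < 1 : new max is b/(a-b) = (g (k+1))⁻¹
      have hfl : ⌊(g α k)⁻¹⌋ = (m : ℤ) + 1 := by
        rw [Int.floor_eq_iff]
        constructor
        · push_cast; linarith
        · push_cast; linarith
      have hgk1 : g α (k + 1) = (a - b) / b := by
        rw [g_succ, ← Int.self_sub_floor, hfl]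
        push_cast
        linarith [hval]
      refine ⟨k + 1, 0, ?_⟩
      have hmax : max ((a - b) / b) (b / (a - b)) = b / (a - b) := by
        apply max_eq_right
        have h1' : (a - b) / b < 1 := hlt
        have h2' : 1 < b / (a - b) := (one_lt_div hab').mpr (by nlinarith [div_lt_one hb |>.mp hlt])
        linarith
      rw [hmax, hgk1, inv_div]
      push_cast
      ring
    · -- 1 < (a-b)/b : new max is (a-b)/b
      refine ⟨k, m + 1, ?_⟩
      have hmax : max ((a - b) / b) (b / (a - b)) = (a - b) / b := by
        apply max_eq_left
        have h2' : b / (a - b) < 1 := (div_lt_one hab').mpr (by nlinarith [one_lt_div hb |>.mp hgt])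
        linarith
      rw [hmax, hval]
      push_cast
      ring
  refine ⟨hratio', ?_, ?_⟩
  · have e : (a / b - 1) * (Y : ℝ) = a / b * Y - Y := by ring
    rw [hd, e]
    linarith
  · obtain ⟨k', m', hk'⟩ := hratio'
    have hbd : b / (a - b) < (B : ℝ) + 1 := by
      have hle : b / (a - b) ≤ max ((a - b) / b) (b / (a - b)) := le_max_right _ _
      have := ratio_lt hB k' m'
      linarith [hk' ▸ hle]
    have hS : (0 : ℝ) ≤ (X : ℝ) + Y := by positivity
    have hmul : b / (a - b) * ((X : ℝ) + Y) ≤ ((B : ℝ) + 1) * ((X : ℝ) + Y) :=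
      mul_le_mul_of_nonneg_right hbd.le hS
    have hYS : (Y : ℝ) ≤ (X : ℝ) + Y := by linarith [show (0:ℝ) ≤ (X:ℝ) from Nat.cast_nonneg X]
    have e : ((B : ℝ) + 2) * ((X : ℝ) + Y) = ((X : ℝ) + Y) + ((B : ℝ) + 1) * ((X : ℝ) + Y) := by
      ring
    rw [e]
    linarith

end SturmAux

namespace SturmAux

lemma step_inv {α : ℝ} {B : ℤ}
    (hg : ∀ k, Irrational (g α k) ∧ 0 < g α k ∧ g α k < 1)
    (hB : ∀ k : ℕ, pq α k ≤ B)
    {t : SDI} (h : Inv α B t) : Inv α B t.step := by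
  have hne : t.l ≠ t.r := by
    intro he
    obtain ⟨k, m, hk⟩ := h.ratio
    have h1 : max (t.l / t.r) (t.r / t.l) = 1 := by
      rw [he, div_self h.rpos.ne', max_self]
    exact (irr_val hg k m).ne_one (hk.symm.trans h1)
  rcases lt_or_gt_of_ne hne with hc | hc
  · -- l < r : the `else` branch, `P` grows
    have hstep : t.step = ⟨t.l, t.r - t.l, t.w ++ t.M, t.M, t.P ++ t.M⟩ := by
      rw [SDI.step, if_neg (not_lt.mpr hc.le)]
    have hmax : max (t.l / t.r) (t.r / t.l) = t.r / t.l :=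
      max_eq_right (le_of_lt (lt_trans ((div_lt_one h.rpos).mpr hc)
        ((one_lt_div h.lpos).mpr hc)))
    have hratio : ∃ k m : ℕ, t.r / t.l = (g α k)⁻¹ - (m : ℝ) := hmax ▸ h.ratio
    obtain ⟨hr', h1', h2'⟩ := key hg hB h.lpos hc hratio h.ineqP
    rw [hstep]
    refine ⟨h.lpos, by simpa using hc, ?_, ?_, ?_, ?_, ?_, ?_⟩
    · obtain ⟨k, m, hr⟩ := hr'
      exact ⟨k, m, by rw [max_comm] at hr; exact hr⟩
    · exact h.hM
    · simp only [List.length_append]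
      have := h.hM; have := h.hP; omega
    · simp only [List.length_append]
      push_cast
      convert h2' using 2 <;> push_cast <;> ring
    · simp only [List.length_append]
      push_cast
      convert h1' using 2 <;> push_cast <;> ring
    · simp only [List.length_append]
      have := h.hw
      omega
  · -- r < l : the `then` branch, `M` grows
    have hstep : t.step = ⟨t.l - t.r, t.r, t.w ++ t.P, t.M ++ t.P, t.P⟩ := by
      rw [SDI.step, if_pos hc]
    have hmax : max (t.l / t.r) (t.r / t.l) = t.l / t.r :=
      max_eq_left (le_of_lt (lt_trans ((div_lt_one h.lpos).mpr hc)
        ((one_lt_div h.rpos).mpr hc)))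
    have hratio : ∃ k m : ℕ, t.l / t.r = (g α k)⁻¹ - (m : ℝ) := hmax ▸ h.ratio
    obtain ⟨hr', h1', h2'⟩ := key hg hB h.rpos hc hratio h.ineqM
    rw [hstep]
    refine ⟨by simpa using hc, h.rpos, ?_, ?_, ?_, ?_, ?_, ?_⟩
    · exact hr'
    · simp only [List.length_append]
      have := h.hM; have := h.hP; omega
    · exact h.hP
    · simp only [List.length_append]
      push_cast
      convert h1' using 2 <;> push_cast <;> ring
    · simp only [List.length_append]
      push_cast
      convert h2' using 2 <;> push_cast <;> ring
    · simp only [List.length_append]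
      have := h.hw
      omega

end SturmAux

namespace SturmAux

lemma inv_base {α : ℝ} {B : ℤ} (hirr : Irrational α) (h0 : 0 < α) (h2 : α < 1/2)
    (hB : ∀ k : ℕ, pq α k ≤ B) :
    Inv α B ⟨α, 1 - 2 * α, [false], [false], [true, false]⟩ := by
  have hr0 : (0 : ℝ) < 1 - 2 * α := by linarith
  have hainv : α * α⁻¹ = 1 := mul_inv_cancel₀ h0.ne'
  have hαB : α⁻¹ < (B : ℝ) + 1 := by
    have h1 : α⁻¹ < (⌊α⁻¹⌋ : ℝ) + 1 := Int.lt_floor_add_one _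
    have h2' : (⌊α⁻¹⌋ : ℝ) ≤ (B : ℝ) := by
      have := hB 0
      rw [pq_eq, g_zero] at this
      exact_mod_cast this
    linarith
  have hne3 : α ≠ 1/3 := by
    intro he
    exact hirr ⟨1/3, by rw [he]; norm_num⟩
  have he2 : (1 - 2*α)/α = α⁻¹ - 2 := by
    field_simp
  have hratio : ∃ k m : ℕ, max (α / (1 - 2*α)) ((1 - 2*α) / α) = (g α k)⁻¹ - (m : ℝ) := by
    rcases lt_or_gt_of_ne hne3 with hlt | hgt
    · refine ⟨0, 2, ?_⟩
      have hmax : max (α / (1 - 2*α)) ((1 - 2*α) / α) = (1 - 2*α) / α := by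
        apply max_eq_right
        have ha : α / (1 - 2*α) < 1 := (div_lt_one hr0).mpr (by linarith)
        have hb : 1 < (1 - 2*α) / α := (one_lt_div h0).mpr (by linarith)
        linarith
      rw [hmax, g_zero, he2]
      norm_num
    · refine ⟨1, 0, ?_⟩
      have hfl : ⌊α⁻¹⌋ = 2 := by
        rw [Int.floor_eq_iff]
        constructor
        · push_cast; nlinarith
        · push_cast; nlinarith
      have hg1 : g α 1 = (1 - 2*α)/α := by
        rw [g_succ, g_zero, ← Int.self_sub_floor, hfl, he2]
        norm_num
      have hmax : max (α / (1 - 2*α)) ((1 - 2*α) / α) = α / (1 - 2*α) := by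
        apply max_eq_left
        have ha : 1 < α / (1 - 2*α) := (one_lt_div hr0).mpr (by linarith)
        have hb : (1 - 2*α) / α < 1 := (div_lt_one h0).mpr (by linarith)
        linarith
      rw [hmax, hg1, inv_div]
      norm_num
  have hbound : α / (1 - 2*α) < (B : ℝ) + 1 := by
    obtain ⟨k, m, hk⟩ := hratio
    have := ratio_lt hB k m
    have hle : α / (1 - 2*α) ≤ max (α / (1 - 2*α)) ((1 - 2*α) / α) := le_max_left _ _
    linarith [hk ▸ hle]
  refine ⟨h0, by simpa using hr0, ?_, by simp, by simp, ?_, ?_, by simp⟩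
  · simpa using hratio
  · -- 1 + (α/(1-2α)) * 2 ≤ (B+2) * 2
    simp only [List.length_cons, List.length_nil]
    push_cast
    nlinarith
  · -- 2 + ((1-2α)/α) * 1 ≤ (B+2) * 1
    simp only [List.length_cons, List.length_nil]
    push_cast
    rw [show (1 : ℝ) - 2*α = 1 - 2*α from rfl]
    nlinarith [he2, hαB]

lemma inv_sdi {α : ℝ} {B : ℤ} (hirr : Irrational α) (h0 : 0 < α) (h2 : α < 1/2)
    (hB : ∀ k : ℕ, pq α k ≤ B) :
    ∀ n : ℕ, Inv α B (sdi α (n + 1)) := by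
  have hg := g_mem hirr h0 (by linarith)
  intro n
  induction n with
  | zero => exact inv_base hirr h0 h2 hB
  | succ n ih =>
    have he : sdi α (n + 1 + 1) = (sdi α (n + 1)).step := by
      show SDI.step^[n + 1] _ = _
      rw [Function.iterate_succ_apply']
      rfl
    rw [he]
    exact step_inv hg hB ih

end SturmAux

/-- Lemma: if `α` has bounded partial quotients then there is a constant `K_1 > 0` with
`min(|P_n|, |M_n|) > K_1·|w_n|` for every `n ≥ 1`. -/
theorem min_length_ge_of_bounded_partial_quotients
    (α : ℝ) (hirr : Irrational α) (h0 : 0 < α) (h2 : α < 1/2) (hbpq : BoundedPQ α) :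
    ∃ K₁ : ℝ, 0 < K₁ ∧ ∀ n : ℕ, 1 ≤ n →
      K₁ * (sdi α n).w.length <
        min ((sdi α n).P.length : ℝ) ((sdi α n).M.length : ℝ) := by
  obtain ⟨B, hB⟩ := hbpq
  have hB1 : (1 : ℤ) ≤ B := by
    have h1 : (1 : ℤ) ≤ pq α 0 := by
      rw [SturmAux.pq_eq, SturmAux.g_zero]
      refine Int.le_floor.mpr ?_
      have : α * α⁻¹ = 1 := mul_inv_cancel₀ h0.ne'
      push_cast
      nlinarith
    exact h1.trans (hB 0)
  have hBR : (1 : ℝ) ≤ (B : ℝ) := by exact_mod_cast hB1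
  have hBpos : (0 : ℝ) < (B : ℝ) + 3 := by linarith
  refine ⟨((B : ℝ) + 3)⁻¹, by positivity, ?_⟩
  intro n hn
  obtain ⟨m, rfl⟩ : ∃ m, n = m + 1 := ⟨n - 1, (Nat.succ_pred_eq_of_pos hn).symm⟩
  have h := SturmAux.inv_sdi hirr h0 h2 hB m
  set t := sdi α (m + 1) with ht
  have hlr : 0 ≤ t.l / t.r * (t.P.length : ℝ) := by
    have := div_pos h.lpos h.rpos
    positivity
  have hrl : 0 ≤ t.r / t.l * (t.M.length : ℝ) := by
    have := div_pos h.rpos h.lpos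
    positivity
  have hMP : (t.M.length : ℝ) ≤ ((B : ℝ) + 2) * t.P.length := by linarith [h.ineqM]
  have hPM : (t.P.length : ℝ) ≤ ((B : ℝ) + 2) * t.M.length := by linarith [h.ineqP]
  have hw : (t.w.length : ℝ) < (t.M.length : ℝ) + t.P.length := by exact_mod_cast h.hw
  have hMpos : (1 : ℝ) ≤ (t.M.length : ℝ) := by exact_mod_cast h.hM
  have hPpos : (1 : ℝ) ≤ (t.P.length : ℝ) := by exact_mod_cast h.hP
  rw [lt_min_iff]
  constructor
  · -- < |P|
    have key : (t.M.length : ℝ) + t.P.length ≤ ((B : ℝ) + 3) * t.P.length := by nlinarith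
    calc ((B : ℝ) + 3)⁻¹ * t.w.length < ((B : ℝ) + 3)⁻¹ * ((t.M.length : ℝ) + t.P.length) := by
          apply mul_lt_mul_of_pos_left hw
          positivity
      _ ≤ ((B : ℝ) + 3)⁻¹ * (((B : ℝ) + 3) * t.P.length) := by
          apply mul_le_mul_of_nonneg_left key
          positivity
      _ = t.P.length := by
          rw [← mul_assoc, inv_mul_cancel₀ hBpos.ne']
          ring
  · -- < |M|
    have key : (t.M.length : ℝ) + t.P.length ≤ ((B : ℝ) + 3) * t.M.length := by nlinarith
    calc ((B : ℝ) + 3)⁻¹ * t.w.length < ((B : ℝ) + 3)⁻¹ * ((t.M.length : ℝ) + t.P.length) := by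
          apply mul_lt_mul_of_pos_left hw
          positivity
      _ ≤ ((B : ℝ) + 3)⁻¹ * (((B : ℝ) + 3) * t.M.length) := by
          apply mul_le_mul_of_nonneg_left key
          positivity
      _ = t.M.length := by
          rw [← mul_assoc, inv_mul_cancel₀ hBpos.ne']
          ring
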